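/- arXiv:1102.3055 — 2 statements merged into one kernel-verified Lean document; each statement's English description precedes it below -/
import Mathlib

section
/- Let G be a finite group with no subgroup of index 2. Suppose that for each i = 1, 2 the group G is generated by elements aᵢ, bᵢ where aᵢ has order exactly 2, bᵢ has order exactly 3, and aᵢbᵢ has order exactly nᵢ; set tᵢ = nᵢ/2 if nᵢ is even and tᵢ = nᵢ if nᵢ is odd. If t₁ and t₂ are coprime and each tᵢ > 3, then G admits an unmixed Beauville structure of type (t₁, t₁, t₁; t₂, t₂, t₂), i.e. one in which a₁, b₁, c₁ all have order t₁ and a₂, b₂, c₂ all have order t₂. -/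
section BeauvilleAux

variable {G : Type*} [Group G]

/-- The basic word identity: if `a² = b³ = 1` then
`(ab)² · b⁻¹(ab)²b · b(ab)²b⁻¹ = 1`. -/
lemma beauville_word_identity (a b : G) (ha : a * a = 1) (hb : b * b * b = 1) :
    (a*b)^2 * (b⁻¹ * (a*b)^2 * b) * (b * (a*b)^2 * b⁻¹) = 1 := by
  have hbinv : b⁻¹ = b * b := inv_eq_of_mul_eq_one_right (by rw [← mul_assoc]; exact hb)
  have ha' : ∀ m : G, a * (a * m) = m := fun m => by rw [← mul_assoc, ha, one_mul]
  have hb' : ∀ m : G, b * (b * (b * m)) = m := fun m => by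
    rw [← mul_assoc, ← mul_assoc, hb, one_mul]
  have hb'' : b * (b * b) = 1 := by rw [← mul_assoc]; exact hb
  simp only [pow_two, hbinv, mul_assoc, ha', hb', ha, hb'', mul_one]

/-- Helper: membership in the normalizer of a closure can be checked on generators. -/
lemma mem_normalizer_closure_of (S : Set G) (g : G)
    (h1 : ∀ s ∈ S, g * s * g⁻¹ ∈ Subgroup.closure S)
    (h2 : ∀ s ∈ S, g⁻¹ * s * g ∈ Subgroup.closure S) :
    g ∈ Subgroup.normalizer (Subgroup.closure S : Set G) := by
  have H1 : Subgroup.closure S ≤ (Subgroup.closure S).comap (MulAut.conj g).toMonoidHom := by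
    rw [Subgroup.closure_le]
    intro s hs
    simpa [Subgroup.mem_comap, MulAut.conj_apply] using h1 s hs
  have H2 : Subgroup.closure S ≤ (Subgroup.closure S).comap (MulAut.conj g⁻¹).toMonoidHom := by
    rw [Subgroup.closure_le]
    intro s hs
    simpa [Subgroup.mem_comap, MulAut.conj_apply] using h2 s hs
  rw [Subgroup.mem_normalizer_iff]
  intro h
  constructor
  · intro hh
    simpa [Subgroup.mem_comap, MulAut.conj_apply] using H1 hh
  · intro hh
    have := H2 hh
    simp only [Subgroup.mem_comap, MulEquiv.coe_toMonoidHom, MulAut.conj_apply, inv_inv] at this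
    group at this
    simpa [mul_assoc] using this

/-- If a normal subgroup has cyclic quotient generated by the image of `g`,
then its index is `orderOf` the image of `g`. -/
lemma index_eq_orderOf_image {H : Subgroup G} [H.Normal] {g : G}
    (hg : Subgroup.zpowers (QuotientGroup.mk' H g) = ⊤) :
    H.index = orderOf (QuotientGroup.mk' H g) := by
  rw [Subgroup.index_eq_card, ← Nat.card_zpowers, hg]
  exact (Nat.card_congr Subgroup.topEquiv.toEquiv).symm

/-- The image of a two-element generating set generates the quotient. -/
lemma closure_image_pair_top {H : Subgroup G} [H.Normal] {u v : G}
    (hgen : Subgroup.closure ({u, v} : Set G) = ⊤) :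
    Subgroup.closure ({QuotientGroup.mk' H u, QuotientGroup.mk' H v} :
      Set (G ⧸ H)) = ⊤ := by
  have : Subgroup.closure ((QuotientGroup.mk' H) '' ({u, v} : Set G)) = ⊤ := by
    rw [← MonoidHom.map_closure, hgen, ← MonoidHom.range_eq_map]
    exact MonoidHom.range_eq_top_of_surjective _ (QuotientGroup.mk'_surjective H)
  rwa [Set.image_insert_eq, Set.image_singleton] at this

lemma closure_pair_one_right {u : G} :
    Subgroup.closure ({u, (1 : G)} : Set G) = Subgroup.zpowers u := by
  rw [Subgroup.zpowers_eq_closure]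
  refine le_antisymm (Subgroup.closure_le _ |>.mpr ?_) (Subgroup.closure_mono ?_)
  · rintro s (rfl | rfl)
    · exact Subgroup.subset_closure rfl
    · exact Subgroup.one_mem _
  · intro s hs; exact Or.inl hs

/-- The key generation lemma: if `G` (finite, no index-2 subgroup) is generated by
`a` of order 2 and `b` of order 3, then the triple `(ab)², b⁻¹(ab)²b, b(ab)²b⁻¹`
also generates `G`. -/
lemma beauville_triple_generates [Finite G]
    (hindex : ∀ H : Subgroup G, H.index ≠ 2)
    (a b : G) (ha : orderOf a = 2) (hb : orderOf b = 3)
    (hgen : Subgroup.closure ({a, b} : Set G) = ⊤) :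
    Subgroup.closure ({(a*b)^2, b⁻¹ * (a*b)^2 * b, b * (a*b)^2 * b⁻¹} : Set G) = ⊤ := by
  have ha2 : a * a = 1 := by
    have := pow_orderOf_eq_one a; rw [ha, pow_two] at this; exact this
  have hb3 : b * b * b = 1 := by
    have := pow_orderOf_eq_one b; rw [hb, pow_succ, pow_two] at this; exact this
  have hainv : a⁻¹ = a := inv_eq_of_mul_eq_one_right ha2
  have hbb : b * b = b⁻¹ :=
    (inv_eq_of_mul_eq_one_right (by rw [← mul_assoc]; exact hb3)).symm
  set x : G := (a*b)^2 with hx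
  set y : G := b⁻¹ * (a*b)^2 * b with hy
  set z : G := b * (a*b)^2 * b⁻¹ with hz
  -- Step 1: M := ⟨b, aba⟩ = ⊤
  set M : Subgroup G := Subgroup.closure ({b, a*b*a} : Set G) with hM
  have hbM : b ∈ M := Subgroup.subset_closure (Or.inl rfl)
  have habaM : a*b*a ∈ M := Subgroup.subset_closure (Or.inr rfl)
  have ha' : ∀ m : G, a * (a * m) = m := fun m => by rw [← mul_assoc, ha2, one_mul]
  have haconj : a * (a*b*a) * a⁻¹ = b := by simp [hainv, mul_assoc, ha', ha2]
  have haconj' : a * (a*b*a) * a = b := by simp [mul_assoc, ha', ha2]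
  have hMnormal : M.Normal := by
    rw [← Subgroup.normalizer_eq_top_iff, eq_top_iff, ← hgen, Subgroup.closure_le]
    simp only [Set.insert_subset_iff, Set.singleton_subset_iff, SetLike.mem_coe]
    constructor
    · -- a normalizes M
      apply mem_normalizer_closure_of
      · intro t ht
        rcases ht with h | h
        · rw [h, hainv]; exact habaM
        · rw [h, haconj]; exact hbM
      · intro t ht
        rcases ht with h | h
        · rw [h, hainv]; exact habaM
        · rw [h, hainv, haconj']; exact hbM
    · exact Subgroup.le_normalizer hbM
  have hMtop : M = ⊤ := by
    have htop : Subgroup.closure ({QuotientGroup.mk' M a, QuotientGroup.mk' M b} :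
        Set (G ⧸ M)) = ⊤ := closure_image_pair_top hgen
    have hbq : QuotientGroup.mk' M b = 1 := (QuotientGroup.eq_one_iff b).mpr hbM
    rw [hbq, closure_pair_one_right] at htop
    have hidx : M.index = orderOf (QuotientGroup.mk' M a) := index_eq_orderOf_image htop
    have hdvd : M.index ∣ 2 := by
      rw [hidx, ← ha]; exact orderOf_map_dvd _ a
    rcases (Nat.prime_two.eq_one_or_self_of_dvd _ hdvd) with h1 | h2
    · exact Subgroup.index_eq_one.mp h1
    · exact absurd h2 (hindex M)
  -- Step 2: N := ⟨x, b⟩ = ⊤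
  set N : Subgroup G := Subgroup.closure ({x, b} : Set G) with hN
  have hxN : x ∈ N := Subgroup.subset_closure (Or.inl rfl)
  have hbN : b ∈ N := Subgroup.subset_closure (Or.inr rfl)
  have hNtop : N = ⊤ := by
    rw [eq_top_iff, ← hMtop, Subgroup.closure_le]
    simp only [Set.insert_subset_iff, Set.singleton_subset_iff, SetLike.mem_coe]
    constructor
    · exact hbN
    · have : a*b*a = x * b⁻¹ := by simp [hx, pow_two, mul_assoc]
      rw [this]; exact mul_mem hxN (inv_mem hbN)
  -- Step 3: H := ⟨x, y, z⟩ is normal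
  set S : Set G := {x, y, z} with hS
  set H : Subgroup G := Subgroup.closure S with hH
  have hxH : x ∈ H := Subgroup.subset_closure (Or.inl rfl)
  have hyH : y ∈ H := Subgroup.subset_closure (Or.inr (Or.inl rfl))
  have hzH : z ∈ H := Subgroup.subset_closure (Or.inr (Or.inr rfl))
  have e1 : b * y * b⁻¹ = x := by rw [hy, hx]; simp [mul_assoc]
  have e2 : b * z * b⁻¹ = y := by
    rw [hz, hy]
    have : b * (b * (a*b)^2 * b⁻¹) * b⁻¹ = (b*b) * (a*b)^2 * (b*b)⁻¹ := by
      simp [mul_assoc, mul_inv_rev]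
    rw [this, hbb, inv_inv]
  have e3 : b⁻¹ * y * b = z := by
    rw [hy, hz]
    have : b⁻¹ * (b⁻¹ * (a*b)^2 * b) * b = (b*b)⁻¹ * (a*b)^2 * (b*b) := by
      simp [mul_assoc, mul_inv_rev]
    rw [this, hbb, inv_inv]
  have e4 : b⁻¹ * z * b = x := by rw [hz, hx]; simp [mul_assoc]
  have hHnormal : H.Normal := by
    rw [← Subgroup.normalizer_eq_top_iff, eq_top_iff, ← hNtop, Subgroup.closure_le]
    simp only [Set.insert_subset_iff, Set.singleton_subset_iff, SetLike.mem_coe]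
    constructor
    · exact Subgroup.le_normalizer hxH
    · -- b normalizes H
      apply mem_normalizer_closure_of
      · intro t ht
        rcases ht with h | h | h
        · rw [h]; exact hzH
        · rw [h, e1]; exact hxH
        · rw [h, e2]; exact hyH
      · intro t ht
        rcases ht with h | h | h
        · rw [h]; exact hyH
        · rw [h, e3]; exact hzH
        · rw [h, e4]; exact hxH
  -- Step 4: quotient by H is generated by image of b, and is trivial
  have htop : Subgroup.closure ({QuotientGroup.mk' H x, QuotientGroup.mk' H b} :
      Set (G ⧸ H)) = ⊤ := closure_image_pair_top hNtop
  have hxq : QuotientGroup.mk' H x = 1 := (QuotientGroup.eq_one_iff x).mpr hxH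
  have hswap : ({QuotientGroup.mk' H x, QuotientGroup.mk' H b} : Set (G ⧸ H)) =
      {QuotientGroup.mk' H b, QuotientGroup.mk' H x} := Set.pair_comm _ _
  rw [hswap, hxq, closure_pair_one_right] at htop
  have hidx : H.index = orderOf (QuotientGroup.mk' H b) := index_eq_orderOf_image htop
  have hadvd : orderOf (QuotientGroup.mk' H a) ∣ 2 := by
    rw [← ha]; exact orderOf_map_dvd _ a
  have hadvd' : orderOf (QuotientGroup.mk' H a) ∣ H.index := by
    rw [Subgroup.index_eq_card]; exact orderOf_dvd_natCard _
  have hdvd3 : H.index ∣ 3 := by rw [hidx, ← hb]; exact orderOf_map_dvd _ b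
  have haq : QuotientGroup.mk' H a = 1 := by
    rw [← orderOf_eq_one_iff]
    have : orderOf (QuotientGroup.mk' H a) ∣ Nat.gcd 2 3 :=
      Nat.dvd_gcd hadvd (hadvd'.trans hdvd3)
    simpa using this
  have hbq2 : (QuotientGroup.mk' H b) ^ 2 = 1 := by
    have hxab : QuotientGroup.mk' H x = (QuotientGroup.mk' H a * QuotientGroup.mk' H b) ^ 2 := by
      rw [hx, map_pow, map_mul]
    rw [hxab, haq, one_mul] at hxq
    exact hxq
  have hbdvd2 : orderOf (QuotientGroup.mk' H b) ∣ 2 := orderOf_dvd_of_pow_eq_one hbq2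
  have hbdvd3 : orderOf (QuotientGroup.mk' H b) ∣ 3 := by
    rw [← hb]; exact orderOf_map_dvd _ b
  have hone : H.index = 1 := by
    rw [hidx]
    have := Nat.dvd_gcd hbdvd2 hbdvd3
    simpa using this
  exact Subgroup.index_eq_one.mp hone

/-- The order of `(ab)²` is `t`. -/
lemma orderOf_ab_sq [Finite G] (a b : G) {n t : ℕ} (hab : orderOf (a * b) = n)
    (ht : t = if n % 2 = 0 then n / 2 else n) :
    orderOf ((a*b)^2) = t := by
  rw [orderOf_pow, hab]
  rcases Nat.mod_two_eq_zero_or_one n with h | h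
  · rw [ht, if_pos h]
    congr 1
    rw [Nat.gcd_comm, Nat.gcd_rec, h]
    decide
  · rw [ht, if_neg (by omega)]
    have hg : Nat.gcd n 2 = 1 := by rw [Nat.gcd_comm, Nat.gcd_rec, h]; decide
    rw [hg, Nat.div_one]

lemma orderOf_conj' (g x : G) : orderOf (g * x * g⁻¹) = orderOf x := by
  have : g * x * g⁻¹ = (MulAut.conj g) x := by rw [MulAut.conj_apply]
  rw [this, MulEquiv.orderOf_eq]

end BeauvilleAux

/-- An unmixed Beauville structure on a group `G`. -/
def IsBeauvilleStructure {G : Type*} [Group G] (a₁ b₁ c₁ a₂ b₂ c₂ : G) : Prop :=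
  a₁ * b₁ * c₁ = 1 ∧ a₂ * b₂ * c₂ = 1 ∧
  Subgroup.closure ({a₁, b₁, c₁} : Set G) = ⊤ ∧
  Subgroup.closure ({a₂, b₂, c₂} : Set G) = ⊤ ∧
  (1 : ℚ) / (orderOf a₁ : ℚ) + 1 / (orderOf b₁ : ℚ) + 1 / (orderOf c₁ : ℚ) < 1 ∧
  (1 : ℚ) / (orderOf a₂ : ℚ) + 1 / (orderOf b₂ : ℚ) + 1 / (orderOf c₂ : ℚ) < 1 ∧
  ∀ x ∈ ({a₁, b₁, c₁} : Set G), ∀ y ∈ ({a₂, b₂, c₂} : Set G),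
    ∀ i j : ℤ, IsConj (x ^ i) (y ^ j) → x ^ i = 1

/-- Corollary 4.2: if a finite group `G` with no subgroup of index 2 is a
smooth quotient of `Δ(2, 3, n₁)` and `Δ(2, 3, n₂)` with associated parameters
`t₁, t₂ > 3` coprime, then `G` admits an unmixed Beauville structure of type
`(t₁, t₁, t₁; t₂, t₂, t₂)`. -/
theorem beauville_of_two_23n_generations {G : Type*} [Group G] [Finite G]
    (hindex : ∀ H : Subgroup G, H.index ≠ 2)
    (a₁ b₁ a₂ b₂ : G) (n₁ n₂ t₁ t₂ : ℕ)
    (ha₁ : orderOf a₁ = 2) (hb₁ : orderOf b₁ = 3) (hab₁ : orderOf (a₁ * b₁) = n₁)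
    (hgen₁ : Subgroup.closure ({a₁, b₁} : Set G) = ⊤)
    (ha₂ : orderOf a₂ = 2) (hb₂ : orderOf b₂ = 3) (hab₂ : orderOf (a₂ * b₂) = n₂)
    (hgen₂ : Subgroup.closure ({a₂, b₂} : Set G) = ⊤)
    (ht₁ : t₁ = if n₁ % 2 = 0 then n₁ / 2 else n₁)
    (ht₂ : t₂ = if n₂ % 2 = 0 then n₂ / 2 else n₂)
    (hcop : Nat.Coprime t₁ t₂) (ht₁3 : 3 < t₁) (ht₂3 : 3 < t₂) :
    ∃ x₁ y₁ z₁ x₂ y₂ z₂ : G, IsBeauvilleStructure x₁ y₁ z₁ x₂ y₂ z₂ ∧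
      orderOf x₁ = t₁ ∧ orderOf y₁ = t₁ ∧ orderOf z₁ = t₁ ∧
      orderOf x₂ = t₂ ∧ orderOf y₂ = t₂ ∧ orderOf z₂ = t₂ := by
  have ha2₁ : a₁ * a₁ = 1 := by
    have := pow_orderOf_eq_one a₁; rw [ha₁, pow_two] at this; exact this
  have hb3₁ : b₁ * b₁ * b₁ = 1 := by
    have := pow_orderOf_eq_one b₁; rw [hb₁, pow_succ, pow_two] at this; exact this
  have ha2₂ : a₂ * a₂ = 1 := by
    have := pow_orderOf_eq_one a₂; rw [ha₂, pow_two] at this; exact this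
  have hb3₂ : b₂ * b₂ * b₂ = 1 := by
    have := pow_orderOf_eq_one b₂; rw [hb₂, pow_succ, pow_two] at this; exact this
  -- orders
  have hox₁ : orderOf ((a₁*b₁)^2) = t₁ := orderOf_ab_sq a₁ b₁ hab₁ ht₁
  have hox₂ : orderOf ((a₂*b₂)^2) = t₂ := orderOf_ab_sq a₂ b₂ hab₂ ht₂
  have hoy₁ : orderOf (b₁⁻¹ * (a₁*b₁)^2 * b₁) = t₁ := by
    rw [show b₁⁻¹ * (a₁*b₁)^2 * b₁ = b₁⁻¹ * (a₁*b₁)^2 * b₁⁻¹⁻¹ by rw [inv_inv],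
      orderOf_conj', hox₁]
  have hoz₁ : orderOf (b₁ * (a₁*b₁)^2 * b₁⁻¹) = t₁ := by rw [orderOf_conj', hox₁]
  have hoy₂ : orderOf (b₂⁻¹ * (a₂*b₂)^2 * b₂) = t₂ := by
    rw [show b₂⁻¹ * (a₂*b₂)^2 * b₂ = b₂⁻¹ * (a₂*b₂)^2 * b₂⁻¹⁻¹ by rw [inv_inv],
      orderOf_conj', hox₂]
  have hoz₂ : orderOf (b₂ * (a₂*b₂)^2 * b₂⁻¹) = t₂ := by rw [orderOf_conj', hox₂]
  -- the rationals inequality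
  have hineq : ∀ t : ℕ, 3 < t →
      (1 : ℚ) / (t : ℚ) + 1 / (t : ℚ) + 1 / (t : ℚ) < 1 := by
    intro t ht
    have ht0 : (0 : ℚ) < (t : ℚ) := by exact_mod_cast show 0 < t by omega
    have : (1 : ℚ) / t + 1 / t + 1 / t = 3 / t := by ring
    rw [this, div_lt_one ht0]
    exact_mod_cast ht
  refine ⟨(a₁*b₁)^2, b₁⁻¹ * (a₁*b₁)^2 * b₁, b₁ * (a₁*b₁)^2 * b₁⁻¹,
         (a₂*b₂)^2, b₂⁻¹ * (a₂*b₂)^2 * b₂, b₂ * (a₂*b₂)^2 * b₂⁻¹,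
         ⟨beauville_word_identity a₁ b₁ ha2₁ hb3₁,
          beauville_word_identity a₂ b₂ ha2₂ hb3₂,
          beauville_triple_generates hindex a₁ b₁ ha₁ hb₁ hgen₁,
          beauville_triple_generates hindex a₂ b₂ ha₂ hb₂ hgen₂,
          by rw [hox₁, hoy₁, hoz₁]; exact hineq t₁ ht₁3,
          by rw [hox₂, hoy₂, hoz₂]; exact hineq t₂ ht₂3, ?_⟩,
         hox₁, hoy₁, hoz₁, hox₂, hoy₂, hoz₂⟩
  -- the conjugacy condition
  intro x hx y hy i j hconj
  have hxo : orderOf x = t₁ := by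
    rcases hx with rfl | rfl | rfl
    · exact hox₁
    · exact hoy₁
    · exact hoz₁
  have hyo : orderOf y = t₂ := by
    rcases hy with rfl | rfl | rfl
    · exact hox₂
    · exact hoy₂
    · exact hoz₂
  have hxi : orderOf (x ^ i) ∣ t₁ := by
    apply orderOf_dvd_of_pow_eq_one
    rw [← zpow_natCast, ← zpow_mul, mul_comm, zpow_mul, zpow_natCast, ← hxo,
      pow_orderOf_eq_one, one_zpow]
  have hyj : orderOf (y ^ j) ∣ t₂ := by
    apply orderOf_dvd_of_pow_eq_one
    rw [← zpow_natCast, ← zpow_mul, mul_comm, zpow_mul, zpow_natCast, ← hyo,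
      pow_orderOf_eq_one, one_zpow]
  have heq : orderOf (x ^ i) = orderOf (y ^ j) := by
    rcases isConj_iff.mp hconj with ⟨c, hc⟩
    rw [← hc, orderOf_conj']
  rw [← orderOf_eq_one_iff]
  have : orderOf (x ^ i) ∣ Nat.gcd t₁ t₂ := Nat.dvd_gcd hxi (heq ▸ hyj)
  rwa [hcop, Nat.dvd_one] at this
end

section
/- Let G be a finite group and p a prime such that the Sylow p-subgroups of G are cyclic. If (a₁,b₁,c₁), (a₂,b₂,c₂) is an unmixed Beauville structure on G, then there do not exist x ∈ {a₁,b₁,c₁} and y ∈ {a₂,b₂,c₂} such that p divides the order of x and p divides the order of y. In particular, G admits no unmixed Beauville structure in which all six elements have order p. -/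
open Pointwise

/-- In a finite cyclic group, any solution of `w ^ p = 1` lies in the cyclic subgroup
generated by an element of order `p`. -/
lemma mem_zpowers_of_pow_eq_one {α : Type*} [Group α] [Fintype α] [IsCyclic α]
    {p : ℕ} (hp : 0 < p) {u w : α} (hu : orderOf u = p) (hw : w ^ p = 1) :
    w ∈ Subgroup.zpowers u := by
  classical
  have h1 : (Finset.univ.filter (fun a : α => a ^ p = 1)).card ≤ p :=
    IsCyclic.card_pow_eq_one_le hp
  have hsub : (Subgroup.zpowers u : Set α).toFinset ⊆
      Finset.univ.filter (fun a : α => a ^ p = 1) := by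
    intro z hz
    simp only [Set.mem_toFinset, SetLike.mem_coe] at hz
    simp only [Finset.mem_filter, Finset.mem_univ, true_and]
    refine orderOf_dvd_iff_pow_eq_one.mp ?_
    have h2 : orderOf z ∣ orderOf u := orderOf_dvd_of_mem_zpowers hz
    rwa [hu] at h2
  have hcard : p ≤ (Subgroup.zpowers u : Set α).toFinset.card := by
    rw [Set.toFinset_card]
    have h3 : Nat.card (Subgroup.zpowers u) = p := by rw [Nat.card_zpowers, hu]
    rw [← Nat.card_eq_fintype_card]
    exact le_of_eq (by rw [← h3]; exact Nat.card_congr (Equiv.setCongr rfl) |>.symm ▸ rfl)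
  have heq := Finset.eq_of_subset_of_card_le hsub (h1.trans hcard)
  have hwmem : w ∈ Finset.univ.filter (fun a : α => a ^ p = 1) := by
    simp only [Finset.mem_filter, Finset.mem_univ, true_and]; exact hw
  rw [← heq] at hwmem
  simpa [Set.mem_toFinset] using hwmem

lemma key_conj {G : Type*} [Group G] [Finite G] {p : ℕ} (hp : p.Prime)
    (hcyc : ∀ P : Sylow p G, IsCyclic (P : Subgroup G))
    {x y : G} (hx : p ∣ orderOf x) (hy : p ∣ orderOf y) :
    ∃ i j : ℤ, IsConj (x ^ i) (y ^ j) ∧ x ^ i ≠ 1 := by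
  classical
  haveI : Fact p.Prime := ⟨hp⟩
  haveI : Finite (Sylow p G) :=
    Finite.of_injective (fun P : Sylow p G => (P : Subgroup G))
      (fun P Q h => Sylow.ext h)
  have hx0 : orderOf x ≠ 0 := (orderOf_pos x).ne'
  have hy0 : orderOf y ≠ 0 := (orderOf_pos y).ne'
  set u := x ^ (orderOf x / p) with hudef
  set v := y ^ (orderOf y / p) with hvdef
  have hu : orderOf u = p := orderOf_pow_orderOf_div hx0 hx
  have hv : orderOf v = p := orderOf_pow_orderOf_div hy0 hy
  have hup : IsPGroup p (Subgroup.zpowers u) :=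
    IsPGroup.of_card (n := 1) (by rw [Nat.card_zpowers, hu, pow_one])
  have hvp : IsPGroup p (Subgroup.zpowers v) :=
    IsPGroup.of_card (n := 1) (by rw [Nat.card_zpowers, hv, pow_one])
  obtain ⟨P, hP⟩ := hup.exists_le_sylow
  obtain ⟨Q, hQ⟩ := hvp.exists_le_sylow
  obtain ⟨g, hg⟩ := MulAction.exists_smul_eq G Q P
  have hconjQ : MulAut.conj g • (Q : Subgroup G) = (P : Subgroup G) := by
    rw [← Sylow.coe_subgroup_smul, hg]
  have hvP : g * v * g⁻¹ ∈ (P : Subgroup G) := by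
    rw [← hconjQ]
    have := Subgroup.smul_mem_pointwise_smul v (MulAut.conj g) (Q : Subgroup G)
      (hQ (Subgroup.mem_zpowers v))
    simpa [MulAut.smul_def, MulAut.conj_apply] using this
  have huP : u ∈ (P : Subgroup G) := hP (Subgroup.mem_zpowers u)
  haveI : IsCyclic (P : Subgroup G) := hcyc P
  haveI : Fintype (P : Subgroup G) := Fintype.ofFinite _
  set u' : (P : Subgroup G) := ⟨u, huP⟩ with hu'def
  set w' : (P : Subgroup G) := ⟨g * v * g⁻¹, hvP⟩ with hw'def
  have hu' : orderOf u' = p := by rw [hu'def, Subgroup.orderOf_mk, hu]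
  have hvpow : v ^ p = 1 := by rw [← hv]; exact pow_orderOf_eq_one v
  have hw' : w' ^ p = 1 := by
    apply Subtype.ext
    push_cast [SubmonoidClass.coe_pow]
    have : (MulAut.conj g) (v ^ p) = ((MulAut.conj g) v) ^ p := map_pow _ _ _
    simp only [MulAut.conj_apply, hvpow, map_one] at this
    simpa [hw'def, hvpow] using this.symm
  obtain ⟨k, hk0⟩ := mem_zpowers_of_pow_eq_one hp.pos hu' hw'
  have hk : u' ^ k = w' := hk0
  have hkG : u ^ k = g * v * g⁻¹ := by
    have := congrArg (Subtype.val) hk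
    simpa [SubgroupClass.coe_zpow] using this
  have hx1 : x ^ ((orderOf x / p : ℕ) : ℤ) = u :=
    (zpow_natCast x (orderOf x / p)).trans hudef.symm
  have hy1 : y ^ ((orderOf y / p : ℕ) : ℤ) = v :=
    (zpow_natCast y (orderOf y / p)).trans hvdef.symm
  have hxeq : x ^ (((orderOf x / p : ℕ) : ℤ) * k) = u ^ k := by rw [zpow_mul, hx1]
  refine ⟨((orderOf x / p : ℕ) : ℤ) * k, ((orderOf y / p : ℕ) : ℤ), ?_, ?_⟩
  · rw [hxeq, hy1, hkG]
    exact (isConj_iff.mpr ⟨g, rfl⟩).symm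
  · intro hcontra
    rw [hxeq, hkG] at hcontra
    have hv1 : v = 1 := by
      have := congrArg (fun z => g⁻¹ * z * g) hcontra
      simpa [mul_assoc] using this
    rw [hv1, orderOf_one] at hv
    exact hp.one_lt.ne hv

/-- If the Sylow `p`-subgroups of a finite group `G` are cyclic, then no
unmixed Beauville structure on `G` has an element of order divisible by `p` in
each of its two triples; in particular `G` has no unmixed Beauville structure
in which all six elements have order `p`. -/
theorem no_beauville_p_in_both_triples_of_cyclic_sylow
    {G : Type*} [Group G] [Finite G] (p : ℕ) (hp : p.Prime)
    (hcyc : ∀ P : Sylow p G, IsCyclic (P : Subgroup G)) :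
    (∀ a₁ b₁ c₁ a₂ b₂ c₂ : G, IsBeauvilleStructure a₁ b₁ c₁ a₂ b₂ c₂ →
      ¬ ∃ x ∈ ({a₁, b₁, c₁} : Set G), ∃ y ∈ ({a₂, b₂, c₂} : Set G),
        p ∣ orderOf x ∧ p ∣ orderOf y) ∧
    (∀ a₁ b₁ c₁ a₂ b₂ c₂ : G,
      orderOf a₁ = p → orderOf b₁ = p → orderOf c₁ = p →
      orderOf a₂ = p → orderOf b₂ = p → orderOf c₂ = p →
      ¬ IsBeauvilleStructure a₁ b₁ c₁ a₂ b₂ c₂) := by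
  have main : ∀ a₁ b₁ c₁ a₂ b₂ c₂ : G, IsBeauvilleStructure a₁ b₁ c₁ a₂ b₂ c₂ →
      ¬ ∃ x ∈ ({a₁, b₁, c₁} : Set G), ∃ y ∈ ({a₂, b₂, c₂} : Set G),
        p ∣ orderOf x ∧ p ∣ orderOf y := by
    rintro a₁ b₁ c₁ a₂ b₂ c₂ hbs ⟨x, hxmem, y, hymem, hpx, hpy⟩
    obtain ⟨i, j, hconj, hne⟩ := key_conj hp hcyc hpx hpy
    exact hne (hbs.2.2.2.2.2.2 x hxmem y hymem i j hconj)
  refine ⟨main, ?_⟩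
  intro a₁ b₁ c₁ a₂ b₂ c₂ ha₁ _ _ ha₂ _ _ hbs
  exact main a₁ b₁ c₁ a₂ b₂ c₂ hbs
    ⟨a₁, by simp, a₂, by simp, by rw [ha₁], by rw [ha₂]⟩
end
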